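/- Fix η₀ > 0. There exists a constant C₁ > 0, depending only on η₀, such that for every admissible quadruple (n,m,ν,μ) and all reals θ, φ one has |N_{n,m}^{ν,μ}(θ,φ)| ≤ C₁ · (n+m+1). (Linear growth bound for the normal derivatives of the interior toroidal harmonics.) -/

import Mathlib

open Real MeasureTheory intervalIntegral Filter Topology

/-- Associated Legendre function of the second kind of half-integer degree,
`Q_{n-1/2}^m(t)`, defined via its real integral representation (valid for `t > 1`). -/
noncomputable def Qh (n m : ℕ) (t : ℝ) : ℝ :=
  ((-1 : ℝ) ^ m / (2 : ℝ) ^ ((n : ℝ) + 1 / 2)) *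
    (Real.Gamma ((n : ℝ) + (m : ℝ) + 1 / 2) / Real.Gamma ((n : ℝ) + 1 / 2)) *
    (t ^ 2 - 1) ^ ((m : ℝ) / 2) *
    ∫ s in (-1 : ℝ)..1, (1 - s ^ 2) ^ ((n : ℝ) - 1 / 2) * (t - s) ^ (-((n : ℝ) + (m : ℝ) + 1 / 2))

/-- `q_{n,m} = Q_{n-1/2}^m(cosh η₀)`. -/
noncomputable def qh (η₀ : ℝ) (n m : ℕ) : ℝ := Qh n m (Real.cosh η₀)

/-- `Φ_n^{+1}(θ) = cos (n θ)`, `Φ_n^{-1}(θ) = sin (n θ)`. -/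
noncomputable def Phi (ν : ℤ) (n : ℤ) (θ : ℝ) : ℝ :=
  if ν = 1 then Real.cos ((n : ℝ) * θ) else Real.sin ((n : ℝ) * θ)

/-- A quadruple `(n, m, ν, μ)` is admissible. -/
def Admissible (n m : ℕ) (ν μ : ℤ) : Prop :=
  (ν = 1 ∨ ν = -1) ∧ (μ = 1 ∨ μ = -1) ∧ ¬(n = 0 ∧ ν = -1) ∧ ¬(m = 0 ∧ μ = -1)

/-- Toroidal Neumann constant `ρ_{n,m}(η₀)` (`n ≥ 1`). -/
noncomputable def rhoT (η₀ : ℝ) (n m : ℕ) : ℝ :=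
  if n = 1 then
    (1 / (2 * Real.sinh η₀)) *
      (Real.cosh η₀ + (2 * (m : ℝ) - 1) * qh η₀ 1 m / qh η₀ 0 m)
  else
    (1 / (4 * Real.sinh η₀)) *
      ((2 * (n : ℝ) - 1) * Real.cosh η₀ +
        (2 * ((m : ℝ) - (n : ℝ)) + 1) * qh η₀ n m / qh η₀ (n - 1) m)

/-- Toroidal Neumann constant `σ_{n,m}(η₀)`. -/
noncomputable def sigmaT (η₀ : ℝ) (n m : ℕ) : ℝ :=
  (-1 / (2 * Real.sinh η₀)) *
    ((2 * (n : ℝ) * Real.cosh η₀ ^ 2 + 1) +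
      (2 * ((m : ℝ) - (n : ℝ)) - 1) * Real.cosh η₀ * qh η₀ (n + 1) m / qh η₀ n m)

/-- Toroidal Neumann constant `τ_{n,m}(η₀)`. -/
noncomputable def tauT (η₀ : ℝ) (n m : ℕ) : ℝ :=
  (1 / (4 * Real.sinh η₀)) *
    ((2 * (n : ℝ) + 3) * Real.cosh η₀ +
      (2 * ((m : ℝ) - (n : ℝ)) - 3) * qh η₀ (n + 2) m / qh η₀ (n + 1) m)

/-- The normal derivative `N_{n,m}^{ν,μ}(θ,φ)` of the interior toroidal harmonic
`I_{n,m}^{ν,μ}` on the torus `η = η₀`. -/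
noncomputable def NDer (η₀ : ℝ) (n m : ℕ) (ν μ : ℤ) (θ φ : ℝ) : ℝ :=
  (Real.sqrt (Real.cosh η₀ - Real.cos θ) / (4 * Real.sinh η₀)) * Phi μ (m : ℤ) φ *
    (Phi ν ((n : ℤ) - 1) θ *
        ((1 + 2 * (n : ℝ)) * Real.cosh η₀ -
          (2 * ((n : ℝ) - (m : ℝ)) + 1) * qh η₀ (n + 1) m / qh η₀ n m) -
      2 * Phi ν (n : ℤ) θ *
        ((2 * (n : ℝ) * Real.cosh η₀ ^ 2 + 1) -
          (2 * ((n : ℝ) - (m : ℝ)) + 1) * Real.cosh η₀ * qh η₀ (n + 1) m / qh η₀ n m) +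
      Phi ν ((n : ℤ) + 1) θ *
        ((1 + 2 * (n : ℝ)) * Real.cosh η₀ -
          (2 * ((n : ℝ) - (m : ℝ)) + 1) * qh η₀ (n + 1) m / qh η₀ n m))

/-- Interior toroidal harmonic `I_{n,m}^{ν,μ}[η₀]` in toroidal coordinates. -/
noncomputable def Ih (η₀ : ℝ) (n m : ℕ) (ν μ : ℤ) (η θ φ : ℝ) : ℝ :=
  Real.sqrt (Real.cosh η - Real.cos θ) *
    (Qh n m (Real.cosh η) / Qh n m (Real.cosh η₀)) * Phi ν (n : ℤ) θ * Phi μ (m : ℤ) φ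


open Set in
private lemma auxMyInt (t p q : ℝ) (ht : 1 < t) (hp : -1 < p) :
    IntervalIntegrable (fun s => (1 - s ^ 2) ^ p * (t - s) ^ q) volume (-1) 1 := by
  have part1 : IntervalIntegrable (fun s => (1 - s ^ 2) ^ p * (t - s) ^ q) volume 0 1 := by
    have h1 : IntervalIntegrable (fun s : ℝ => (1 - s) ^ p) volume 0 1 := by
      have := (intervalIntegrable_rpow' (a := 0) (b := 1) hp).comp_sub_left 1
      norm_num at this
      exact this.symm
    have hcont : ContinuousOn (fun s : ℝ => (1 + s) ^ p * (t - s) ^ q) (Set.uIcc 0 1) := by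
      rw [Set.uIcc_of_le (by norm_num : (0:ℝ) ≤ 1)]
      apply ContinuousOn.mul
      · apply ContinuousOn.rpow_const (by fun_prop)
        intro x hx
        exact Or.inl (by nlinarith [hx.1, hx.2])
      · apply ContinuousOn.rpow_const (by fun_prop)
        intro x hx
        exact Or.inl (by nlinarith [hx.1, hx.2])
    have hprod := h1.mul_continuousOn hcont
    rw [intervalIntegrable_iff] at hprod ⊢
    apply hprod.congr_fun _ measurableSet_uIoc
    intro x hx
    rw [Set.uIoc_of_le (by norm_num : (0:ℝ) ≤ 1)] at hx
    have h1x : (0:ℝ) ≤ 1 - x := by linarith [hx.2]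
    have h2x : (0:ℝ) ≤ 1 + x := by linarith [hx.1]
    simp only
    rw [show (1 : ℝ) - x ^ 2 = (1 - x) * (1 + x) by ring, Real.mul_rpow h1x h2x]
    ring
  have part2 : IntervalIntegrable (fun s => (1 - s ^ 2) ^ p * (t - s) ^ q) volume (-1) 0 := by
    have h1 : IntervalIntegrable (fun s : ℝ => (1 + s) ^ p) volume (-1) 0 := by
      have := (intervalIntegrable_rpow' (a := 0) (b := 1) hp).comp_add_right 1
      norm_num at this
      convert this using 2 with x
      rw [add_comm]
    have hcont : ContinuousOn (fun s : ℝ => (1 - s) ^ p * (t - s) ^ q) (Set.uIcc (-1) 0) := by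
      rw [Set.uIcc_of_le (by norm_num : (-1:ℝ) ≤ 0)]
      apply ContinuousOn.mul
      · apply ContinuousOn.rpow_const (by fun_prop)
        intro x hx
        exact Or.inl (by nlinarith [hx.1, hx.2])
      · apply ContinuousOn.rpow_const (by fun_prop)
        intro x hx
        exact Or.inl (by nlinarith [hx.1, hx.2])
    have hprod := h1.mul_continuousOn hcont
    rw [intervalIntegrable_iff] at hprod ⊢
    apply hprod.congr_fun _ measurableSet_uIoc
    intro x hx
    rw [Set.uIoc_of_le (by norm_num : (-1:ℝ) ≤ 0)] at hx
    have h1x : (0:ℝ) ≤ 1 - x := by linarith [hx.2]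
    have h2x : (0:ℝ) ≤ 1 + x := by linarith [hx.1]
    simp only
    rw [show (1 : ℝ) - x ^ 2 = (1 + x) * (1 - x) by ring, Real.mul_rpow h2x h1x]
    ring
  exact part2.trans part1

open Set in
private lemma auxMyPos (t p q : ℝ) (ht : 1 < t) (hp : -1 < p) :
    0 < ∫ s in (-1:ℝ)..1, (1 - s ^ 2) ^ p * (t - s) ^ q := by
  apply intervalIntegral_pos_of_pos_on (auxMyInt t p q ht hp)
  · intro x hx
    have h1 : 0 < 1 - x ^ 2 := by nlinarith [hx.1, hx.2]
    have h2 : 0 < t - x := by linarith [hx.2]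
    positivity
  · norm_num

open Set in
private lemma auxMyKey (t : ℝ) (ht : 1 < t) (a b : ℝ) (ha : 1/2 ≤ a) (hb : 0 < b) :
    b * ∫ s in (-1:ℝ)..1, (1 - s ^ 2) ^ a * (t - s) ^ (-(b+1))
      ≤ (2*a) * ∫ s in (-1:ℝ)..1, (1 - s ^ 2) ^ (a-1) * (t - s) ^ (-b) := by
  set w : ℝ → ℝ := fun s => (1 - s ^ 2) ^ (a-1) * (t - s) ^ (-b) with hw
  set v : ℝ → ℝ := fun s => (1 - s ^ 2) ^ a * (t - s) ^ (-(b+1)) with hv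
  set g : ℝ → ℝ := fun s => w s * (-(2*a) * s) with hg
  set F : ℝ → ℝ := fun s => (1 - s ^ 2) ^ a * (t - s) ^ (-b) with hF
  have ha1 : -1 < a - 1 := by linarith
  have hIw : IntervalIntegrable w volume (-1) 1 := auxMyInt t (a-1) (-b) ht ha1
  have hIv : IntervalIntegrable v volume (-1) 1 := auxMyInt t a (-(b+1)) ht (by linarith)
  have hIg : IntervalIntegrable g volume (-1) 1 := by
    apply hIw.mul_continuousOn
    fun_prop
  -- derivative
  have hder : ∀ x ∈ Ioo (-1:ℝ) 1, HasDerivAt F (g x + b * v x) x := by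
    intro x hx
    have h1x : (0:ℝ) < 1 - x ^ 2 := by nlinarith [hx.1, hx.2]
    have h2x : (0:ℝ) < t - x := by linarith [hx.2]
    have d1 : HasDerivAt (fun s : ℝ => 1 - s ^ 2) (-(2*x)) x := by
      simpa using (hasDerivAt_pow 2 x).const_sub 1
    have d1' : HasDerivAt (fun s : ℝ => (1 - s ^ 2) ^ a) (-(2*x) * a * (1 - x ^ 2) ^ (a-1)) x :=
      d1.rpow_const (Or.inl h1x.ne')
    have d2 : HasDerivAt (fun s : ℝ => t - s) (-1) x := by
      simpa using (hasDerivAt_id x).const_sub t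
    have d2' : HasDerivAt (fun s : ℝ => (t - s) ^ (-b)) (-1 * (-b) * (t - x) ^ (-b-1)) x :=
      d2.rpow_const (Or.inl h2x.ne')
    have := d1'.mul d2'
    refine this.congr_deriv ?_
    simp only [hg, hw, hv]
    rw [show -b - 1 = -(b+1) by ring]
    ring
  -- continuity of F on Icc
  have hcont : ContinuousOn F (Icc (-1:ℝ) 1) := by
    apply ContinuousOn.mul
    · apply ContinuousOn.rpow_const (by fun_prop)
      intro x hx
      exact Or.inr (by linarith)
    · apply ContinuousOn.rpow_const (by fun_prop)
      intro x hx
      exact Or.inl (by nlinarith [hx.1, hx.2])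
  have hint : IntervalIntegrable (fun x => g x + b * v x) volume (-1) 1 :=
    hIg.add (hIv.const_mul b)
  have ftc : ∫ x in (-1:ℝ)..1, (g x + b * v x) = F 1 - F (-1) :=
    integral_eq_sub_of_hasDeriv_right_of_le (by norm_num) hcont
      (fun x hx => (hder x hx).hasDerivWithinAt) hint
  have hF1 : F 1 = 0 := by
    simp only [hF]
    rw [show (1:ℝ) - 1 ^ 2 = 0 by norm_num, Real.zero_rpow (by linarith)]
    ring
  have hFm1 : F (-1) = 0 := by
    simp only [hF]
    rw [show (1:ℝ) - (-1:ℝ) ^ 2 = 0 by norm_num, Real.zero_rpow (by linarith)]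
    ring
  rw [hF1, hFm1, sub_zero, integral_add hIg (hIv.const_mul b),
    intervalIntegral.integral_const_mul] at ftc
  -- so b * ∫ v = - ∫ g
  have hkey : b * ∫ x in (-1:ℝ)..1, v x = - ∫ x in (-1:ℝ)..1, g x := by linarith
  rw [hkey, ← intervalIntegral.integral_neg]
  have hmono : ∫ x in (-1:ℝ)..1, -g x ≤ ∫ x in (-1:ℝ)..1, (2*a) * w x := by
    apply integral_mono_on (by norm_num) hIg.neg (hIw.const_mul _)
    intro x hx
    have hwx : 0 ≤ w x := by
      have h1x : (0:ℝ) ≤ 1 - x ^ 2 := by nlinarith [hx.1, hx.2]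
      have h2x : (0:ℝ) < t - x := by linarith [hx.2]
      simp only [hw]
      positivity
    simp only [hg, Pi.neg_apply]
    nlinarith [mul_nonneg (mul_nonneg (by linarith [hx.2] : (0:ℝ) ≤ 1 - x) hwx) (by linarith : (0:ℝ) ≤ a)]
  calc ∫ x in (-1:ℝ)..1, -g x ≤ ∫ x in (-1:ℝ)..1, (2*a) * w x := hmono
    _ = (2*a) * ∫ x in (-1:ℝ)..1, w x := intervalIntegral.integral_const_mul _ _

open Set in
private lemma absQh (n m : ℕ) (t : ℝ) (ht : 1 < t) :
    |Qh n m t| = (1 / (2:ℝ) ^ ((n:ℝ) + 1/2)) *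
      (Real.Gamma ((n:ℝ)+(m:ℝ)+1/2) / Real.Gamma ((n:ℝ)+1/2)) * (t^2-1)^((m:ℝ)/2) *
      ∫ s in (-1:ℝ)..1, (1-s^2)^((n:ℝ)-1/2)*(t-s)^(-((n:ℝ)+(m:ℝ)+1/2)) := by
  have hG1 : 0 < Real.Gamma ((n:ℝ)+(m:ℝ)+1/2) := Real.Gamma_pos_of_pos (by positivity)
  have hG2 : 0 < Real.Gamma ((n:ℝ)+1/2) := Real.Gamma_pos_of_pos (by positivity)
  have hP : (0:ℝ) ≤ (t^2-1)^((m:ℝ)/2) := Real.rpow_nonneg (by nlinarith) _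
  have hJ : 0 < ∫ s in (-1:ℝ)..1, (1-s^2)^((n:ℝ)-1/2)*(t-s)^(-((n:ℝ)+(m:ℝ)+1/2)) :=
    auxMyPos t _ _ ht (by
      have : (0:ℝ) ≤ (n:ℝ) := Nat.cast_nonneg n
      linarith)
  unfold Qh
  rw [abs_mul, abs_mul, abs_mul, abs_div, abs_pow, abs_neg, abs_one, one_pow,
    abs_of_pos (Real.rpow_pos_of_pos two_pos _), abs_of_pos (div_pos hG1 hG2),
    abs_of_nonneg hP, abs_of_pos hJ]

open Set in
private lemma auxQhMono (η₀ : ℝ) (hη₀ : 0 < η₀) (n m : ℕ) :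
    |qh η₀ (n+1) m| ≤ |qh η₀ n m| ∧ 0 < |qh η₀ n m| := by
  set t := Real.cosh η₀ with hts
  have ht : 1 < t := by
    rw [hts]
    exact Real.one_lt_cosh.mpr hη₀.ne'
  have hN : (0:ℝ) ≤ (n:ℝ) := Nat.cast_nonneg n
  have hM : (0:ℝ) ≤ (m:ℝ) := Nat.cast_nonneg m
  have h1 := absQh n m t ht
  have h2 := absQh (n+1) m t ht
  push_cast at h2
  set A : ℝ := (n:ℝ) + 1/2 with hA
  set B : ℝ := (n:ℝ) + (m:ℝ) + 1/2 with hB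
  have hApos : 0 < A := by rw [hA]; linarith
  have hBpos : 0 < B := by rw [hB]; linarith
  rw [show (n:ℝ)+1+(m:ℝ)+1/2 = B + 1 by rw [hB]; ring,
      show (n:ℝ)+1+1/2 = A + 1 by rw [hA]; ring,
      Real.Gamma_add_one hBpos.ne', Real.Gamma_add_one hApos.ne',
      Real.rpow_add two_pos, Real.rpow_one,
      show (n:ℝ)+1-1/2 = A by rw [hA]; ring,
      show -(B+1) = -B - 1 by ring] at h2
  rw [show (n:ℝ)-1/2 = A - 1 by rw [hA]; ring,
      show -((n:ℝ)+(m:ℝ)+1/2) = -B by rw [hB]] at h1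
  have key := auxMyKey t ht A B (by rw [hA]; linarith) hBpos
  rw [show -(B+1) = -B-1 by ring] at key
  set J1 : ℝ := ∫ s in (-1:ℝ)..1, (1-s^2)^(A-1)*(t-s)^(-B) with hJ1
  set J2 : ℝ := ∫ s in (-1:ℝ)..1, (1-s^2)^A*(t-s)^(-B-1) with hJ2
  have hJ1pos : 0 < J1 := by
    rw [hJ1, show -B = -(B+1)+1 by ring]
    exact auxMyPos t (A-1) _ ht (by rw [hA]; linarith)
  have hG1 : 0 < Real.Gamma B := Real.Gamma_pos_of_pos hBpos
  have hG2 : 0 < Real.Gamma A := Real.Gamma_pos_of_pos hApos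
  have hE : (0:ℝ) < (2:ℝ) ^ ((n:ℝ)+1/2) := Real.rpow_pos_of_pos two_pos _
  have hP : (0:ℝ) ≤ (t^2-1)^((m:ℝ)/2) := Real.rpow_nonneg (by nlinarith) _
  set E : ℝ := (2:ℝ) ^ ((n:ℝ)+1/2)
  set P : ℝ := (t^2-1)^((m:ℝ)/2)
  constructor
  · rw [show qh η₀ (n+1) m = Qh (n+1) m t from rfl, show qh η₀ n m = Qh n m t from rfl, h1, h2]
    have e2 : 1/(E*2) * (B * Real.Gamma B / (A * Real.Gamma A)) * P * J2
        = ((Real.Gamma B / Real.Gamma A) * P / E) * (B * J2) / (2*A) := by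
      field_simp
    have e1 : 1/E * (Real.Gamma B / Real.Gamma A) * P * J1
        = ((Real.Gamma B / Real.Gamma A) * P / E) * J1 := by ring
    rw [e2, e1, div_le_iff₀ (by positivity)]
    have hK : (0:ℝ) ≤ (Real.Gamma B / Real.Gamma A) * P / E := by positivity
    calc (Real.Gamma B / Real.Gamma A) * P / E * (B * J2)
        ≤ (Real.Gamma B / Real.Gamma A) * P / E * (2*A*J1) := by
          apply mul_le_mul_of_nonneg_left _ hK
          linarith [key]
      _ = (Real.Gamma B / Real.Gamma A) * P / E * J1 * (2*A) := by ring
  · rw [show qh η₀ n m = Qh n m t from rfl, h1]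
    have hPpos : (0:ℝ) < P := Real.rpow_pos_of_pos (by nlinarith) _
    positivity

/-- linear growth bound for the normal derivatives of the interior
toroidal harmonics. -/
theorem normal_derivative_linear_bound (η₀ : ℝ) (hη₀ : 0 < η₀) :
    ∃ C₁ > (0 : ℝ), ∀ (n m : ℕ) (ν μ : ℤ), Admissible n m ν μ → ∀ θ φ : ℝ,
      |NDer η₀ n m ν μ θ φ| ≤ C₁ * ((n : ℝ) + (m : ℝ) + 1) := by
  set t := Real.cosh η₀ with hts
  set s₀ := Real.sinh η₀ with hss
  have ht : 1 < t := Real.one_lt_cosh.mpr hη₀.ne'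
  have hs₀ : 0 < s₀ := Real.sinh_pos_iff.mpr hη₀
  refine ⟨(t+1)^2 * Real.sqrt (t+1) / s₀, by positivity, ?_⟩
  intro n m ν μ _ θ φ
  have hN : (0:ℝ) ≤ (n:ℝ) := Nat.cast_nonneg n
  have hM : (0:ℝ) ≤ (m:ℝ) := Nat.cast_nonneg m
  set X : ℝ := (n:ℝ) + (m:ℝ) + 1 with hX
  have hXpos : (0:ℝ) < X := by rw [hX]; linarith
  -- ratio bound
  obtain ⟨hle, hpos⟩ := auxQhMono η₀ hη₀ n m
  have hr : |qh η₀ (n+1) m / qh η₀ n m| ≤ 1 := by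
    rw [abs_div]
    exact (div_le_one hpos).mpr hle
  set r : ℝ := qh η₀ (n+1) m / qh η₀ n m with hrdef
  -- Phi bound
  have hPhi : ∀ (ν k : ℤ) (x : ℝ), |Phi ν k x| ≤ 1 := by
    intro ν k x
    unfold Phi
    split
    · exact abs_cos_le_one _
    · exact abs_sin_le_one _
  set c : ℝ := 2 * ((n:ℝ) - (m:ℝ)) + 1 with hc
  have hcabs : |c| ≤ 2*(n:ℝ) + 2*(m:ℝ) + 1 := by
    rw [abs_le]; constructor <;> (rw [hc]; nlinarith)
  -- bound on A-term
  have hA : |(1 + 2*(n:ℝ)) * t - c * qh η₀ (n+1) m / qh η₀ n m| ≤ 2 * X * (t+1) := by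
    have h1 : |c * qh η₀ (n+1) m / qh η₀ n m| ≤ |c| := by
      rw [mul_div_assoc, abs_mul]
      exact mul_le_of_le_one_right (abs_nonneg c) hr
    have h2 : |(1 + 2*(n:ℝ)) * t| = (1 + 2*(n:ℝ)) * t := abs_of_nonneg (by positivity)
    calc |(1 + 2*(n:ℝ)) * t - c * qh η₀ (n+1) m / qh η₀ n m|
        ≤ |(1 + 2*(n:ℝ)) * t| + |c * qh η₀ (n+1) m / qh η₀ n m| := abs_sub _ _
      _ ≤ 2 * X * (t+1) := by rw [h2, hX]; nlinarith [hcabs, h1]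
  have hB : |(2*(n:ℝ) * t^2 + 1) - c * t * qh η₀ (n+1) m / qh η₀ n m|
      ≤ 2 * X * (t^2 + t) := by
    have h1 : |c * t * qh η₀ (n+1) m / qh η₀ n m| ≤ |c| * t := by
      rw [mul_div_assoc, abs_mul, abs_mul, abs_of_nonneg (by positivity : (0:ℝ) ≤ t)]
      calc |c| * t * |qh η₀ (n+1) m / qh η₀ n m| ≤ |c| * t * 1 := by
            apply mul_le_mul_of_nonneg_left hr (by positivity)
        _ = |c| * t := by ring
    have h2 : |2*(n:ℝ) * t^2 + 1| = 2*(n:ℝ) * t^2 + 1 := abs_of_nonneg (by positivity)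
    calc |(2*(n:ℝ) * t^2 + 1) - c * t * qh η₀ (n+1) m / qh η₀ n m|
        ≤ |2*(n:ℝ) * t^2 + 1| + |c * t * qh η₀ (n+1) m / qh η₀ n m| := abs_sub _ _
      _ ≤ 2 * X * (t^2 + t) := by rw [h2, hX]; nlinarith [hcabs, h1, abs_nonneg c]
  -- bracket bound
  have hbr : |Phi ν ((n:ℤ)-1) θ * ((1 + 2*(n:ℝ)) * t - c * qh η₀ (n+1) m / qh η₀ n m) -
      2 * Phi ν (n:ℤ) θ * ((2*(n:ℝ) * t^2 + 1) - c * t * qh η₀ (n+1) m / qh η₀ n m) +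
      Phi ν ((n:ℤ)+1) θ * ((1 + 2*(n:ℝ)) * t - c * qh η₀ (n+1) m / qh η₀ n m)|
      ≤ 4 * X * (t+1)^2 := by
    set A := (1 + 2*(n:ℝ)) * t - c * qh η₀ (n+1) m / qh η₀ n m
    set B := (2*(n:ℝ) * t^2 + 1) - c * t * qh η₀ (n+1) m / qh η₀ n m
    have e : Phi ν ((n:ℤ)-1) θ * A - 2 * Phi ν (n:ℤ) θ * B + Phi ν ((n:ℤ)+1) θ * A
        = Phi ν ((n:ℤ)-1) θ * A + (- (2 * Phi ν (n:ℤ) θ * B)) + Phi ν ((n:ℤ)+1) θ * A := by ring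
    rw [e]
    calc |Phi ν ((n:ℤ)-1) θ * A + (- (2 * Phi ν (n:ℤ) θ * B)) + Phi ν ((n:ℤ)+1) θ * A|
        ≤ |Phi ν ((n:ℤ)-1) θ * A| + |(- (2 * Phi ν (n:ℤ) θ * B))| + |Phi ν ((n:ℤ)+1) θ * A| :=
          abs_add_three _ _ _
      _ ≤ 1 * |A| + 2 * (1 * |B|) + 1 * |A| := by
          rw [abs_neg, abs_mul, abs_mul, abs_mul, abs_mul, abs_two]
          have b1 : |Phi ν ((n:ℤ)-1) θ| * |A| ≤ 1 * |A| :=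
            mul_le_mul_of_nonneg_right (hPhi ν ((n:ℤ)-1) θ) (abs_nonneg A)
          have b2 : |Phi ν (n:ℤ) θ| * |B| ≤ 1 * |B| :=
            mul_le_mul_of_nonneg_right (hPhi ν (n:ℤ) θ) (abs_nonneg B)
          have b3 : |Phi ν ((n:ℤ)+1) θ| * |A| ≤ 1 * |A| :=
            mul_le_mul_of_nonneg_right (hPhi ν ((n:ℤ)+1) θ) (abs_nonneg A)
          linarith
      _ ≤ 4 * X * (t+1)^2 := by nlinarith [hA, hB, abs_nonneg A, abs_nonneg B]
  -- assemble
  have hsq : Real.sqrt (t - Real.cos θ) ≤ Real.sqrt (t+1) :=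
    Real.sqrt_le_sqrt (by linarith [Real.neg_one_le_cos θ])
  have hsqnn : 0 ≤ Real.sqrt (t - Real.cos θ) := Real.sqrt_nonneg _
  unfold NDer
  rw [abs_mul, abs_mul]
  have hfac : |Real.sqrt (t - Real.cos θ) / (4 * s₀)| ≤ Real.sqrt (t+1) / (4*s₀) := by
    rw [abs_div, abs_of_nonneg hsqnn, abs_of_pos (by positivity : (0:ℝ) < 4*s₀)]
    apply div_le_div_of_nonneg_right hsq (by positivity)
  rw [← hc]
  calc |Real.sqrt (t - Real.cos θ) / (4 * s₀)| * |Phi μ (m:ℤ) φ| *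
      |Phi ν ((n:ℤ)-1) θ * ((1 + 2*(n:ℝ)) * t - c * qh η₀ (n+1) m / qh η₀ n m) -
        2 * Phi ν (n:ℤ) θ * ((2*(n:ℝ) * t^2 + 1) - c * t * qh η₀ (n+1) m / qh η₀ n m) +
        Phi ν ((n:ℤ)+1) θ * ((1 + 2*(n:ℝ)) * t - c * qh η₀ (n+1) m / qh η₀ n m)|
      ≤ (Real.sqrt (t+1) / (4*s₀)) * 1 * (4 * X * (t+1)^2) := by
        apply mul_le_mul _ hbr (abs_nonneg _) (by positivity)
        exact mul_le_mul hfac (hPhi μ (m:ℤ) φ) (abs_nonneg _) (by positivity)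
    _ = (t+1)^2 * Real.sqrt (t+1) / s₀ * X := by
        field_simp
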